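/- arXiv:1111.5100 — 2 statements merged into one kernel-verified Lean document; each statement's English description precedes it below -/
import Mathlib

section
/- Let K, L ⊆ ℝ² be smooth and strictly convex symmetric convex bodies. Then the quotient and immersion Finsler structures induced by L on ∂K coincide — i.e. for every x ∈ ∂K and every v ∈ ℝ² with f_x^K(v) = 0 one has inf_{t ∈ ℝ} gauge_L(v + t • x) = gauge_L(v) — if and only if L is homothetic to the isoperimetrix of K, i.e. there exists c > 0 such that L = c • J(K°), where J(x₁, x₂) = (−x₂, x₁) is the rotation by π/2 and K° = {y ∈ ℝ² : ⟨x,y⟩ ≤ 1 for all x ∈ K} is the polar body with respect to the standard inner product. -/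
open Set Pointwise

noncomputable section

variable {V : Type*} [NormedAddCommGroup V] [NormedSpace ℝ V]

/-- A symmetric convex body: compact, convex, `0` in the interior, centrally symmetric. -/
def IsSymmConvexBody (K : Set V) : Prop :=
  IsCompact K ∧ Convex ℝ K ∧ 0 ∈ interior K ∧ K = -K

/-- The boundary sphere `∂K = {x | gauge_K x = 1}` of a convex body. -/
def bodySphere (K : Set V) : Set V := {x | gauge K x = 1}

/-- `f` is a supporting functional of `K` at `x`: `f x = 1` and `f ≤ 1` on `K`. -/
def IsSupportFunctional (K : Set V) (x : V) (f : Module.Dual ℝ V) : Prop :=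
  f x = 1 ∧ ∀ y ∈ K, f y ≤ 1

/-- `K` is smooth: at every boundary point there is a unique supporting functional. -/
def IsSmoothBody (K : Set V) : Prop :=
  ∀ x ∈ bodySphere K, ∃! f : Module.Dual ℝ V, IsSupportFunctional K x f

/-- `K` is strictly convex: `∂K` contains no nondegenerate line segment. -/
def IsStrictlyConvexBody (K : Set V) : Prop :=
  ∀ x ∈ bodySphere K, ∀ y ∈ bodySphere K, segment ℝ x y ⊆ bodySphere K → x = y

open RealInnerProductSpace in
/-- The polar in `ℝ²` with respect to the standard inner product. -/
def polar2 (B : Set (EuclideanSpace ℝ (Fin 2))) : Set (EuclideanSpace ℝ (Fin 2)) :=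
  {y | ∀ x ∈ B, ⟪x, y⟫ ≤ 1}

/-- Rotation of the plane by `π/2`: `J(x₁, x₂) = (−x₂, x₁)`. -/
def rotJ (x : EuclideanSpace ℝ (Fin 2)) : EuclideanSpace ℝ (Fin 2) :=
  (WithLp.equiv 2 (Fin 2 → ℝ)).symm ![-x 1, x 0]

/-! ### Auxiliary material -/

open RealInnerProductSpace Topology

abbrev V2 := EuclideanSpace ℝ (Fin 2)

section RotJBasics

lemma rotJ_apply0 (x : V2) : rotJ x 0 = -x 1 := rfl
lemma rotJ_apply1 (x : V2) : rotJ x 1 = x 0 := rfl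

lemma inner_eq (x y : V2) : ⟪x, y⟫ = x 0 * y 0 + x 1 * y 1 := by
  simp [PiLp.inner_apply, Fin.sum_univ_two]; ring

lemma rotJ_inner (x y : V2) : ⟪rotJ x, rotJ y⟫ = ⟪x, y⟫ := by
  simp [inner_eq, rotJ_apply0, rotJ_apply1]; ring

lemma rotJ_self_inner (x : V2) : ⟪x, rotJ x⟫ = 0 := by
  simp [inner_eq, rotJ_apply0, rotJ_apply1]; ring

lemma rotJ_add (x y : V2) : rotJ (x + y) = rotJ x + rotJ y := by
  ext i; fin_cases i <;> simp [rotJ, WithLp.equiv_symm_apply] <;> ring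

lemma rotJ_smul (c : ℝ) (x : V2) : rotJ (c • x) = c • rotJ x := by
  ext i; fin_cases i <;> simp [rotJ, WithLp.equiv_symm_apply, mul_comm]

lemma rotJ_rotJ (x : V2) : rotJ (rotJ x) = -x := by
  ext i; fin_cases i <;> simp [rotJ, WithLp.equiv_symm_apply]

lemma rotJ_neg (x : V2) : rotJ (-x) = -rotJ x := by
  ext i; fin_cases i <;> simp [rotJ, WithLp.equiv_symm_apply]

/-- `rotJ` as a linear equivalence. -/
def rotJe : V2 ≃ₗ[ℝ] V2 where
  toFun := rotJ
  invFun := fun x => -rotJ x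
  map_add' := rotJ_add
  map_smul' := rotJ_smul
  left_inv := fun x => by simp [rotJ_neg, rotJ_rotJ]
  right_inv := fun x => by
    have := rotJ_rotJ (rotJ x)
    simp [rotJ_neg, rotJ_rotJ]

lemma rotJ_injective : Function.Injective rotJ := rotJe.injective

lemma rotJ_ne_zero {x : V2} (hx : x ≠ 0) : rotJ x ≠ 0 := by
  intro h
  exact hx (by simpa using rotJ_injective (h.trans (map_zero rotJe).symm))

lemma exists_smul_rotJ {d v : V2} (hd : d ≠ 0) (h : ⟪d, v⟫ = 0) :
    ∃ c : ℝ, v = c • rotJ d := by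
  have hD : d 0 * d 0 + d 1 * d 1 ≠ 0 := by
    intro hc
    apply hd
    have h0 : d 0 = 0 := by nlinarith [sq_nonneg (d 0), sq_nonneg (d 1)]
    have h1 : d 1 = 0 := by nlinarith [sq_nonneg (d 0), sq_nonneg (d 1)]
    ext i; fin_cases i <;> simp [h0, h1]
  rw [inner_eq] at h
  refine ⟨(d 0 * v 1 - d 1 * v 0) / (d 0 * d 0 + d 1 * d 1), ?_⟩
  have key : ∀ i : Fin 2,
      v i = ((d 0 * v 1 - d 1 * v 0) / (d 0 * d 0 + d 1 * d 1)) * rotJ d i := by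
    rw [Fin.forall_fin_two]
    constructor
    · rw [rotJ_apply0, div_mul_eq_mul_div, eq_div_iff hD]; linear_combination (d 0) * h
    · rw [rotJ_apply1, div_mul_eq_mul_div, eq_div_iff hD]; linear_combination (d 1) * h
  ext i
  rw [PiLp.smul_apply, smul_eq_mul]
  exact key i
end RotJBasics

section BodyBasics
variable {B : Set V2}

lemma IsSymmConvexBody.compact (hB : IsSymmConvexBody B) : IsCompact B := hB.1
lemma IsSymmConvexBody.conv (hB : IsSymmConvexBody B) : Convex ℝ B := hB.2.1
lemma IsSymmConvexBody.zero_int (hB : IsSymmConvexBody B) : 0 ∈ interior B := hB.2.2.1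
lemma IsSymmConvexBody.closed (hB : IsSymmConvexBody B) : IsClosed B := hB.1.isClosed
lemma IsSymmConvexBody.zero_mem (hB : IsSymmConvexBody B) : (0:V2) ∈ B := interior_subset hB.zero_int
lemma IsSymmConvexBody.nhds (hB : IsSymmConvexBody B) : B ∈ 𝓝 (0:V2) :=
  mem_interior_iff_mem_nhds.1 hB.zero_int
lemma IsSymmConvexBody.nonempty (hB : IsSymmConvexBody B) : B.Nonempty := ⟨0, hB.zero_mem⟩
lemma IsSymmConvexBody.neg_mem (hB : IsSymmConvexBody B) {x : V2} (hx : x ∈ B) : -x ∈ B := by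
  have : x ∈ -B := hB.2.2.2 ▸ hx
  exact Set.mem_neg.1 this

lemma IsSymmConvexBody.mem_iff_gauge_le_one (hB : IsSymmConvexBody B) {x : V2} :
    x ∈ B ↔ gauge B x ≤ 1 := by
  rw [gauge_le_one_iff_mem_closure hB.conv hB.nhds, hB.closed.closure_eq]

lemma IsSymmConvexBody.gauge_pos (hB : IsSymmConvexBody B) {x : V2} (hx : x ≠ 0) : 0 < gauge B x :=
  (_root_.gauge_pos (absorbent_nhds_zero hB.nhds)
    (NormedSpace.isVonNBounded_of_isBounded _ hB.compact.isBounded)).2 hx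

lemma IsSymmConvexBody.exists_ball_subset (hB : IsSymmConvexBody B) :
    ∃ r : ℝ, 0 < r ∧ Metric.ball (0:V2) r ⊆ B := by
  rcases Metric.mem_nhds_iff.1 hB.nhds with ⟨r, hr, hsub⟩
  exact ⟨r, hr, hsub⟩

lemma IsSymmConvexBody.exists_subset_ball (hB : IsSymmConvexBody B) :
    ∃ R : ℝ, 0 < R ∧ B ⊆ Metric.closedBall (0:V2) R := by
  rcases hB.compact.isBounded.subset_closedBall 0 with ⟨R, hR⟩
  exact ⟨max R 1, lt_of_lt_of_le one_pos (le_max_right _ _),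
    hR.trans (Metric.closedBall_subset_closedBall (le_max_left _ _))⟩

/-- support function of a set -/
def sF (C : Set V2) (u : V2) : ℝ := sSup ((fun z => ⟪u, z⟫) '' C)

lemma sF_le {C : Set V2} {u : V2} {a : ℝ} (hne : C.Nonempty)
    (h : ∀ z ∈ C, ⟪u, z⟫ ≤ a) : sF C u ≤ a :=
  csSup_le (hne.image _) (by rintro _ ⟨z, hz, rfl⟩; exact h z hz)

lemma le_sF {C : Set V2} {u z : V2} (hC : IsCompact C) (hz : z ∈ C) : ⟪u, z⟫ ≤ sF C u :=
  le_csSup (hC.bddAbove_image ((continuous_const.inner continuous_id).continuousOn)) (Set.mem_image_of_mem _ hz)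

lemma sF_exists_max {C : Set V2} (hC : IsCompact C) (hne : C.Nonempty) (u : V2) :
    ∃ z ∈ C, sF C u = ⟪u, z⟫ := by
  obtain ⟨z, hz, hmax⟩ := hC.exists_isMaxOn (α := ℝ) hne ((continuous_const.inner continuous_id).continuousOn)
  exact ⟨z, hz, le_antisymm (sF_le hne hmax) (le_sF hC hz)⟩

lemma sF_nonneg (hB : IsSymmConvexBody B) (u : V2) : 0 ≤ sF B u := by
  simpa using le_sF hB.compact hB.zero_mem (u := u)

lemma sF_pos (hB : IsSymmConvexBody B) {u : V2} (hu : u ≠ 0) : 0 < sF B u := by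
  obtain ⟨r, hr, hsub⟩ := hB.exists_ball_subset
  have hz : (r/2) • ‖u‖⁻¹ • u ∈ B := by
    apply hsub
    simp only [Metric.mem_ball, dist_zero_right, norm_smul, norm_inv, norm_norm]
    rw [Real.norm_eq_abs, abs_of_pos (by positivity)]
    rw [inv_mul_cancel₀ (norm_ne_zero_iff.2 hu), mul_one]
    linarith
  have := le_sF hB.compact hz (u := u)
  rw [real_inner_smul_right, real_inner_smul_right, real_inner_self_eq_norm_sq] at this
  have hn : 0 < ‖u‖ := norm_pos_iff.2 hu
  have keq : r / 2 * (‖u‖⁻¹ * ‖u‖ ^ 2) = r / 2 * ‖u‖ := by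
    field_simp
  rw [keq] at this
  exact lt_of_lt_of_le (by positivity) this

lemma sF_smul (C : Set V2) {c : ℝ} (hc : 0 ≤ c) (u : V2) : sF C (c • u) = c * sF C u := by
  unfold sF
  have h1 : (fun z : V2 => ⟪c • u, z⟫) = (fun r : ℝ => c * r) ∘ (fun z : V2 => ⟪u, z⟫) := by
    funext z; rw [Function.comp_apply, real_inner_smul_left]
  rw [h1, Set.image_comp]
  have h2 : (fun r : ℝ => c * r) '' ((fun z : V2 => ⟪u, z⟫) '' C)
      = c • ((fun z : V2 => ⟪u, z⟫) '' C) := by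
    ext r
    simp only [Set.mem_image, Set.mem_smul_set, smul_eq_mul]
  rw [h2, Real.sSup_smul_of_nonneg hc, smul_eq_mul]

lemma gauge_polar2 (hB : IsSymmConvexBody B) (u : V2) : gauge (polar2 B) u = sF B u := by
  apply le_antisymm
  · rcases eq_or_lt_of_le (sF_nonneg hB u) with h0 | hpos
    · have hu : u = 0 := by
        by_contra hu
        exact absurd h0.symm (sF_pos hB hu).ne'
      rw [hu, gauge_zero]
      exact sF_nonneg hB 0
    · apply gauge_le_of_mem hpos.le
      rw [Set.mem_smul_set_iff_inv_smul_mem₀ hpos.ne']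
      intro x hx
      rw [real_inner_smul_right]
      rw [inv_mul_le_iff₀ hpos, mul_one]
      rw [real_inner_comm]
      exact le_sF hB.compact hx
  · apply le_csInf
    · obtain ⟨R, hR, hsub⟩ := hB.exists_subset_ball
      refine ⟨(R * ‖u‖) + 1, by positivity, ?_⟩
      rw [Set.mem_smul_set_iff_inv_smul_mem₀ (by positivity)]
      intro x hx
      rw [real_inner_smul_right]
      have h1 : ⟪x, u⟫ ≤ R * ‖u‖ := by
        calc ⟪x, u⟫ ≤ ‖x‖ * ‖u‖ := real_inner_le_norm x u
          _ ≤ R * ‖u‖ := by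
              have := Metric.mem_closedBall.1 (hsub hx)
              rw [dist_zero_right] at this
              exact mul_le_mul_of_nonneg_right this (norm_nonneg u)
      calc ((R * ‖u‖) + 1)⁻¹ * ⟪x, u⟫ ≤ ((R * ‖u‖) + 1)⁻¹ * (R * ‖u‖) := by
            apply mul_le_mul_of_nonneg_left h1 (by positivity)
        _ ≤ 1 := by
            rw [inv_mul_le_iff₀ (by positivity)]; nlinarith
    · rintro r ⟨hr, hmem⟩
      rw [Set.mem_smul_set_iff_inv_smul_mem₀ hr.ne'] at hmem
      apply sF_le hB.nonempty
      intro z hz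
      have := hmem z hz
      rw [real_inner_smul_right, inv_mul_le_iff₀ hr, mul_one, real_inner_comm] at this
      exact this

end BodyBasics

section Polar

variable {B : Set V2}

lemma polar2_convex : Convex ℝ (polar2 B) := by
  intro y hy z hz a b ha hb hab
  intro x hx
  have h1 := hy x hx
  have h2 := hz x hx
  rw [inner_add_right, real_inner_smul_right, real_inner_smul_right]
  nlinarith

lemma polar2_closed : IsClosed (polar2 B) := by
  have : polar2 B = ⋂ x ∈ B, {y : V2 | ⟪x, y⟫ ≤ 1} := by
    ext y; simp [polar2, Set.mem_iInter]
  rw [this]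
  exact isClosed_biInter fun x _ =>
    isClosed_le (continuous_const.inner continuous_id) continuous_const

lemma polar2_body (hB : IsSymmConvexBody B) : IsSymmConvexBody (polar2 B) := by
  obtain ⟨r, hr, hball⟩ := hB.exists_ball_subset
  obtain ⟨R, hR, hRball⟩ := hB.exists_subset_ball
  refine ⟨?_, polar2_convex, ?_, ?_⟩
  · refine IsCompact.of_isClosed_subset (isCompact_closedBall 0 (2/r)) polar2_closed ?_
    intro q hq
    rw [Metric.mem_closedBall, dist_zero_right]
    rcases eq_or_ne q 0 with rfl | hq0
    · simp; positivity
    · have hz : (r/2) • ‖q‖⁻¹ • q ∈ B := by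
        apply hball
        simp only [Metric.mem_ball, dist_zero_right, norm_smul, norm_inv, norm_norm]
        rw [Real.norm_eq_abs, abs_of_pos (by positivity)]
        rw [inv_mul_cancel₀ (norm_ne_zero_iff.2 hq0), mul_one]
        linarith
      have := hq _ hz
      rw [real_inner_smul_left, real_inner_smul_left, real_inner_self_eq_norm_sq] at this
      have hn : 0 < ‖q‖ := norm_pos_iff.2 hq0
      have keq : r / 2 * (‖q‖⁻¹ * ‖q‖ ^ 2) = r / 2 * ‖q‖ := by field_simp
      rw [keq] at this
      rw [le_div_iff₀ hr]
      nlinarith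
  · have hsub : Metric.ball (0:V2) R⁻¹ ⊆ polar2 B := by
      intro y hy x hx
      have hyn : ‖y‖ < R⁻¹ := by
        simpa [dist_zero_right] using hy
      have hxn : ‖x‖ ≤ R := by
        have := hRball hx
        simpa [dist_zero_right] using this
      refine le_of_lt ?_
      calc ⟪x, y⟫ ≤ ‖x‖ * ‖y‖ := real_inner_le_norm x y
        _ ≤ R * ‖y‖ := mul_le_mul_of_nonneg_right hxn (norm_nonneg y)
        _ < R * R⁻¹ := mul_lt_mul_of_pos_left hyn hR
        _ = 1 := mul_inv_cancel₀ hR.ne'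
    exact interior_mono hsub (by simp [Metric.isOpen_ball.interior_eq, hR])
  · ext y
    rw [Set.mem_neg]
    constructor
    · intro hy x hx
      have := hy (-x) (hB.neg_mem hx)
      rw [inner_neg_left] at this
      rw [inner_neg_right]
      exact this
    · intro hy x hx
      have := hy (-x) (hB.neg_mem hx)
      rwa [inner_neg_neg] at this

end Polar

section SphereMax

variable {B : Set V2}

lemma mem_of_bodySphere (hB : IsSymmConvexBody B) {x : V2} (hx : x ∈ bodySphere B) : x ∈ B :=
  hB.mem_iff_gauge_le_one.2 (le_of_eq hx)

lemma bodySphere_ne_zero {x : V2} (hx : x ∈ bodySphere B) : x ≠ 0 := by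
  intro h
  have : gauge B x = 1 := hx
  rw [h, gauge_zero] at this
  norm_num at this

lemma sF_zero {C : Set V2} (hne : C.Nonempty) : sF C 0 = 0 := by
  unfold sF
  have : (fun z : V2 => ⟪(0:V2), z⟫) '' C = {0} := by
    apply Set.Subset.antisymm
    · rintro _ ⟨z, _, rfl⟩; simp
    · rintro r hr
      rcases hne with ⟨z, hz⟩
      rcases hr with rfl
      exact ⟨z, hz, by simp⟩
  rw [this, csSup_singleton]

/-- a point of `B` attaining the max of a nonzero linear functional lies on the sphere -/
lemma gauge_eq_one_of_max (hB : IsSymmConvexBody B) {n x : V2} (hn : n ≠ 0)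
    (hx : x ∈ B) (hmax : ⟪n, x⟫ = sF B n) : x ∈ bodySphere B := by
  have hpos := sF_pos hB hn
  have hle : gauge B x ≤ 1 := hB.mem_iff_gauge_le_one.1 hx
  have hge : 1 ≤ gauge B x := by
    apply le_csInf
    · exact ⟨1, one_pos, by rwa [one_smul]⟩
    · rintro r ⟨hr, hmem⟩
      rw [Set.mem_smul_set_iff_inv_smul_mem₀ hr.ne'] at hmem
      have h1 : ⟪n, r⁻¹ • x⟫ ≤ sF B n := le_sF hB.compact hmem
      rw [real_inner_smul_right, hmax] at h1
      by_contra hlt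
      push_neg at hlt
      have : r⁻¹ * sF B n > sF B n := by
        have h2 : (1:ℝ) < r⁻¹ := (one_lt_inv₀ hr).2 hlt
        nlinarith
      linarith
  exact le_antisymm hle hge

lemma max_unique (hB : IsSymmConvexBody B) (hBsc : IsStrictlyConvexBody B) {n : V2} (hn : n ≠ 0)
    {x y : V2} (hx : x ∈ B) (hy : y ∈ B)
    (hmx : ⟪n, x⟫ = sF B n) (hmy : ⟪n, y⟫ = sF B n) : x = y := by
  apply hBsc x (gauge_eq_one_of_max hB hn hx hmx) y (gauge_eq_one_of_max hB hn hy hmy)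
  rintro z ⟨a, b, ha, hb, hab, rfl⟩
  have hzB : a • x + b • y ∈ B := hB.conv hx hy ha hb hab
  apply gauge_eq_one_of_max hB hn hzB
  rw [inner_add_right, real_inner_smul_right, real_inner_smul_right, hmx, hmy]
  rw [← add_mul, hab, one_mul]

/-- Riesz: every dual functional is an inner product -/
lemma exists_riesz (f : Module.Dual ℝ V2) : ∃ q : V2, ∀ y : V2, f y = ⟪q, y⟫ := by
  classical
  set e : Fin 2 → V2 := fun i => EuclideanSpace.single i (1:ℝ) with he
  refine ⟨f (e 0) • e 0 + f (e 1) • e 1, fun y => ?_⟩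
  have hy : y = y 0 • e 0 + y 1 • e 1 := by
    ext i
    fin_cases i <;> simp [he, EuclideanSpace.single_apply]
  calc f y = f (y 0 • e 0 + y 1 • e 1) := by rw [← hy]
    _ = y 0 * f (e 0) + y 1 * f (e 1) := by
        rw [map_add, map_smul, map_smul]; simp
    _ = ⟪f (e 0) • e 0 + f (e 1) • e 1, y⟫ := by
        rw [inner_add_left, real_inner_smul_left, real_inner_smul_left]
        have h00 : ⟪e 0, y⟫ = y 0 := by simp [he, EuclideanSpace.inner_single_left]
        have h11 : ⟪e 1, y⟫ = y 1 := by simp [he, EuclideanSpace.inner_single_left]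
        rw [h00, h11]; ring

/-- the inner-product functional as a dual vector -/
def dualOf (q : V2) : Module.Dual ℝ V2 :=
  ((innerSL ℝ q : V2 →L[ℝ] ℝ) : V2 →ₗ[ℝ] ℝ)

@[simp] lemma dualOf_apply (q y : V2) : dualOf q y = ⟪q, y⟫ := rfl

lemma dualOf_injective : Function.Injective dualOf := by
  intro q q' h
  have : ∀ y, ⟪q - q', y⟫ = 0 := by
    intro y
    have := congrArg (fun f => f y) h
    simp only [dualOf_apply] at this
    rw [inner_sub_left, this, sub_self]
  have := this (q - q')
  rwa [inner_self_eq_zero, sub_eq_zero] at this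

/-- the gauge of a body equals the support function of its polar -/
lemma gauge_eq_sF_polar2 (hB : IsSymmConvexBody B) (w : V2) :
    gauge B w = sF (polar2 B) w := by
  rcases eq_or_ne w 0 with rfl | hw
  · rw [gauge_zero, sF_zero (polar2_body hB).nonempty]
  have hb : 0 < gauge B w := hB.gauge_pos hw
  apply le_antisymm
  · by_contra hlt
    push_neg at hlt
    set m := sF (polar2 B) w with hm
    have hmpos : 0 < m := sF_pos (polar2_body hB) hw
    set p := m⁻¹ • w with hp
    have hpnot : p ∉ B := by
      intro hmem
      have := hB.mem_iff_gauge_le_one.1 hmem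
      rw [hp, gauge_smul_of_nonneg (by positivity : (0:ℝ) ≤ m⁻¹)] at this
      have : m⁻¹ * gauge B w ≤ 1 := this
      rw [inv_mul_le_iff₀ hmpos, mul_one] at this
      exact absurd this (not_le.2 hlt)
    obtain ⟨f, c, hfB, hfp⟩ := geometric_hahn_banach_closed_point hB.conv hB.closed hpnot
    have hc : 0 < c := by
      have := hfB 0 hB.zero_mem
      simpa using this
    obtain ⟨z, hz⟩ := exists_riesz (f : Module.Dual ℝ V2)
    have hq : c⁻¹ • z ∈ polar2 B := by
      intro x hx
      have h1 : f x < c := hfB x hx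
      have : ⟪x, c⁻¹ • z⟫ = c⁻¹ * f x := by
        rw [real_inner_smul_right, real_inner_comm, ← hz x]
        rfl
      rw [this, inv_mul_le_iff₀ hc, mul_one]
      exact h1.le
    have hle : ⟪w, c⁻¹ • z⟫ ≤ m := le_sF (polar2_body hB).compact hq
    have heq : ⟪w, c⁻¹ • z⟫ = m * (c⁻¹ * f p) := by
      rw [real_inner_smul_right, real_inner_comm, ← hz w]
      have : w = m • p := by rw [hp, smul_smul, mul_inv_cancel₀ hmpos.ne', one_smul]
      rw [this, map_smul]
      simp only [smul_eq_mul]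
      ring_nf
      rfl
    rw [heq] at hle
    have : m * (c⁻¹ * f p) > m := by
      have h2 : 1 < c⁻¹ * f p := by
        rw [← inv_mul_cancel₀ hc.ne']
        exact mul_lt_mul_of_pos_left hfp (by positivity)
      nlinarith
    linarith
  · apply sF_le (polar2_body hB).nonempty
    intro q hq
    have hpmem : (gauge B w)⁻¹ • w ∈ B := by
      apply hB.mem_iff_gauge_le_one.2
      rw [gauge_smul_of_nonneg (by positivity : (0:ℝ) ≤ (gauge B w)⁻¹)]
      have : (gauge B w)⁻¹ * gauge B w = 1 := inv_mul_cancel₀ hb.ne'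
      simp only [smul_eq_mul]
      rw [this]
    have h1 : ⟪(gauge B w)⁻¹ • w, q⟫ ≤ 1 := hq _ hpmem
    rw [real_inner_smul_left, inv_mul_le_iff₀ hb, mul_one] at h1
    exact h1

/-- the normalized point lies on the sphere -/
lemma normalized_mem_sphere (hB : IsSymmConvexBody B) {u : V2} (hu : u ≠ 0) :
    (gauge B u)⁻¹ • u ∈ bodySphere B := by
  have hb : 0 < gauge B u := hB.gauge_pos hu
  show gauge B ((gauge B u)⁻¹ • u) = 1
  rw [gauge_smul_of_nonneg (by positivity : (0:ℝ) ≤ (gauge B u)⁻¹), smul_eq_mul,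
    inv_mul_cancel₀ hb.ne']

/-- maximizers over the polar body = support functionals at normalized point -/
lemma max_iff_support (hB : IsSymmConvexBody B) {u : V2} (hu : u ≠ 0) {q : V2} :
    (q ∈ polar2 B ∧ ⟪u, q⟫ = sF (polar2 B) u) ↔
      IsSupportFunctional B ((gauge B u)⁻¹ • u) (dualOf q) := by
  have hb : 0 < gauge B u := hB.gauge_pos hu
  constructor
  · rintro ⟨hq, hmax⟩
    constructor
    · rw [dualOf_apply, real_inner_smul_right, real_inner_comm, hmax,
        ← gauge_eq_sF_polar2 hB, inv_mul_cancel₀ hb.ne']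
    · intro y hy
      rw [dualOf_apply, real_inner_comm]
      exact hq y hy
  · rintro ⟨hfp, hfle⟩
    have hq : q ∈ polar2 B := by
      intro x hx
      rw [real_inner_comm]
      exact hfle x hx
    refine ⟨hq, ?_⟩
    have : ⟪u, q⟫ = gauge B u * ⟪(gauge B u)⁻¹ • u, q⟫ := by
      rw [real_inner_smul_left]
      field_simp
    rw [this]
    have h2 : ⟪(gauge B u)⁻¹ • u, q⟫ = 1 := by
      rw [real_inner_comm, ← dualOf_apply]
      exact hfp
    rw [h2, mul_one, gauge_eq_sF_polar2 hB]

end SphereMax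

section Separation

variable {B : Set V2}

/-- If the whole line through a boundary direction stays gauge-above, there is a supporting
functional at the normalized point killing the direction. -/
lemma support_kills_direction (hB : IsSymmConvexBody B) {w x : V2} (hw : w ≠ 0)
    (hline : ∀ t : ℝ, gauge B w ≤ gauge B (w + t • x)) :
    ∃ g : Module.Dual ℝ V2, IsSupportFunctional B ((gauge B w)⁻¹ • w) g ∧ g x = 0 := by
  have hb : 0 < gauge B w := hB.gauge_pos hw
  set b := gauge B w with hbdef
  set p := b⁻¹ • w with hpdef
  have hpB : p ∈ B := mem_of_bodySphere hB (normalized_mem_sphere hB hw)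
  set ℓ : Set V2 := Set.range (fun t : ℝ => p + t • x) with hℓ
  have hℓconv : Convex ℝ ℓ := by
    rintro _ ⟨t1, rfl⟩ _ ⟨t2, rfl⟩ a c ha hc hac
    refine ⟨a * t1 + c * t2, ?_⟩
    have hp' : a • p + c • p = p := by rw [← add_smul, hac, one_smul]
    show p + (a * t1 + c * t2) • x = a • (p + t1 • x) + c • (p + t2 • x)
    calc p + (a * t1 + c * t2) • x
        = (a • p + c • p) + (a * t1 + c * t2) • x := by rw [hp']
      _ = a • (p + t1 • x) + c • (p + t2 • x) := by module
  have hgauge_line : ∀ t : ℝ, 1 ≤ gauge B (p + t • x) := by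
    intro t
    have h1 : p + t • x = b⁻¹ • (w + (b * t) • x) := by
      rw [smul_add, smul_smul, inv_mul_cancel_left₀ hb.ne']
    rw [h1, gauge_smul_of_nonneg (by positivity : (0:ℝ) ≤ b⁻¹), smul_eq_mul]
    rw [le_inv_mul_iff₀ hb, mul_one]
    exact hline (b * t)
  have hdisj : Disjoint (interior B) ℓ := by
    rw [Set.disjoint_left]
    rintro y hyint ⟨t, rfl⟩
    have h1 : gauge B (p + t • x) < 1 := interior_subset_gauge_lt_one B hyint
    exact absurd (hgauge_line t) (not_le.2 h1)
  obtain ⟨f, c, hfB, hfℓ⟩ :=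
    geometric_hahn_banach_open (hB.conv.interior) isOpen_interior hℓconv hdisj
  have hc : 0 < c := by
    have := hfB 0 hB.zero_int
    simpa using this
  have hfx : f x = 0 := by
    by_contra hfx
    have h1 : c ≤ f p + ((c - 1 - f p) / f x) * f x := by
      have := hfℓ (p + ((c - 1 - f p) / f x) • x) ⟨_, rfl⟩
      simpa [map_add, map_smul, smul_eq_mul] using this
    rw [div_mul_cancel₀ _ hfx] at h1
    linarith
  have hfle : ∀ y ∈ B, f y ≤ c := by
    intro y hy
    by_contra hgt
    push_neg at hgt
    have hfy : 0 < f y := lt_trans hc hgt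
    set θ := c / f y with hθ
    have hθ1 : θ < 1 := (div_lt_one hfy).2 hgt
    have hθ0 : 0 < θ := by positivity
    have hmem : θ • y ∈ interior B := by
      have := (hB.conv).combo_interior_self_mem_interior hB.zero_int hy
        (by linarith : 0 < 1 - θ) hθ0.le (by ring)
      simpa using this
    have := hfB _ hmem
    rw [map_smul, smul_eq_mul, hθ, div_mul_cancel₀ _ hfy.ne'] at this
    exact lt_irrefl c this
  have hfp : f p = c := by
    have h1 : c ≤ f p := by
      have := hfℓ p ⟨0, by simp⟩
      exact this
    exact le_antisymm (hfle p hpB) h1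
  refine ⟨c⁻¹ • (f : V2 →ₗ[ℝ] ℝ), ⟨?_, ?_⟩, ?_⟩
  · show c⁻¹ * f p = 1
    rw [hfp, inv_mul_cancel₀ hc.ne']
  · intro y hy
    show c⁻¹ * f y ≤ 1
    rw [inv_mul_le_iff₀ hc, mul_one]
    exact hfle y hy
  · show c⁻¹ * f x = 0
    rw [hfx, mul_zero]

/-- key geometric consequence: the maximizer of `⟪w,·⟫` on the polar is orthogonal to x -/
lemma max_perp_of_line (hB : IsSymmConvexBody B) (hBsm : IsSmoothBody B) {w x : V2}
    (hw : w ≠ 0) (hline : ∀ t : ℝ, gauge B w ≤ gauge B (w + t • x)) {q : V2}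
    (hq : q ∈ polar2 B) (hqmax : ⟪w, q⟫ = sF (polar2 B) w) : ⟪q, x⟫ = 0 := by
  obtain ⟨g, hg, hgx⟩ := support_kills_direction hB hw hline
  obtain ⟨f₀, _, huniq⟩ := hBsm _ (normalized_mem_sphere hB hw)
  have h1 : IsSupportFunctional B ((gauge B w)⁻¹ • w) (dualOf q) :=
    (max_iff_support hB hw).1 ⟨hq, hqmax⟩
  have h2 : dualOf q = g := (huniq _ h1).trans (huniq _ hg).symm
  have := congrArg (fun φ => φ x) h2
  simpa [hgx] using this

end Separation

section Danskin

/-- continuity of the (unique) argmax -/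
lemma argmax_continuity {C : Set V2} (hC : IsCompact C) {R : ℝ} (hR : 0 < R)
    (hRb : ∀ q ∈ C, ‖q‖ ≤ R) {u₀ q₀ : V2} (hq₀ : q₀ ∈ C) (hmax : ⟪u₀, q₀⟫ = sF C u₀)
    (huniq : ∀ q ∈ C, ⟪u₀, q⟫ = sF C u₀ → q = q₀) {ε : ℝ} (hε : 0 < ε) :
    ∃ δ > 0, ∀ u : V2, ‖u - u₀‖ < δ → ∀ q ∈ C, ⟪u, q⟫ = sF C u → ‖q - q₀‖ < ε := by
  classical
  set D := C ∩ {q : V2 | ε ≤ ‖q - q₀‖} with hD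
  by_cases hDne : D.Nonempty
  · have hDcl : IsClosed {q : V2 | ε ≤ ‖q - q₀‖} :=
      isClosed_le continuous_const (by fun_prop)
    have hDcpt : IsCompact D := hC.inter_right hDcl
    obtain ⟨q₁, hq₁D, hq₁max⟩ := hDcpt.exists_isMaxOn (α := ℝ) hDne
      ((continuous_const.inner continuous_id).continuousOn)
    have hq₁C : q₁ ∈ C := hq₁D.1
    have hmlt : ⟪u₀, q₁⟫ < sF C u₀ := by
      rcases lt_or_eq_of_le (le_sF hC hq₁C) with h | h
      · exact h
      · exfalso
        have := huniq q₁ hq₁C h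
        rw [this] at hq₁D
        have h2 : ε ≤ ‖q₀ - q₀‖ := hq₁D.2
        simp at h2
        linarith
    set γ := (sF C u₀ - ⟪u₀, q₁⟫) / 2 with hγ
    have hγpos : 0 < γ := by
      rw [hγ]; linarith
    refine ⟨γ / R, by positivity, ?_⟩
    intro u hu q hqC hqm
    by_contra hcon
    push_neg at hcon
    have hqD : q ∈ D := ⟨hqC, hcon⟩
    have huR : ‖u - u₀‖ * R < γ := by
      calc ‖u - u₀‖ * R < (γ / R) * R := by
            exact mul_lt_mul_of_pos_right hu hR
        _ = γ := by field_simp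
    have hb1 : ⟪u₀, q⟫ ≤ ⟪u₀, q₁⟫ := hq₁max hqD
    have hiq : |⟪u - u₀, q⟫| ≤ ‖u - u₀‖ * R := by
      calc |⟪u - u₀, q⟫| ≤ ‖u - u₀‖ * ‖q‖ := abs_real_inner_le_norm _ _
        _ ≤ ‖u - u₀‖ * R := by
            exact mul_le_mul_of_nonneg_left (hRb q hqC) (norm_nonneg _)
    have hiq₀ : |⟪u - u₀, q₀⟫| ≤ ‖u - u₀‖ * R := by
      calc |⟪u - u₀, q₀⟫| ≤ ‖u - u₀‖ * ‖q₀‖ := abs_real_inner_le_norm _ _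
        _ ≤ ‖u - u₀‖ * R := by
            exact mul_le_mul_of_nonneg_left (hRb q₀ hq₀) (norm_nonneg _)
    have hsplit : ⟪u, q⟫ = ⟪u₀, q⟫ + ⟪u - u₀, q⟫ := by
      rw [← inner_add_left]; norm_num
    have hsplit₀ : ⟪u, q₀⟫ = ⟪u₀, q₀⟫ + ⟪u - u₀, q₀⟫ := by
      rw [← inner_add_left]; norm_num
    have hup : ⟪u, q⟫ < ⟪u₀, q₁⟫ + γ := by
      rw [hsplit]
      have := abs_le.1 hiq
      linarith
    have hlo : sF C u₀ - γ < ⟪u, q⟫ := by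
      have h1 : ⟪u, q₀⟫ ≤ sF C u := le_sF hC hq₀
      rw [← hqm] at h1
      rw [hsplit₀] at h1
      have := abs_le.1 hiq₀
      linarith [hmax]
    rw [hγ] at hup hlo
    linarith
  · refine ⟨1, one_pos, fun u _ q hq hqm => ?_⟩
    by_contra h
    push_neg at h
    exact hDne ⟨q, hq, h⟩

/-- Danskin: derivative of the support function at a point with unique maximizer -/
lemma danskin {C : Set V2} (hC : IsCompact C) (hCne : C.Nonempty) {u₀ q₀ : V2}
    (hq₀ : q₀ ∈ C) (hmax : ⟪u₀, q₀⟫ = sF C u₀)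
    (huniq : ∀ q ∈ C, ⟪u₀, q⟫ = sF C u₀ → q = q₀) :
    HasFDerivAt (sF C) (innerSL ℝ q₀ : V2 →L[ℝ] ℝ) u₀ := by
  obtain ⟨R', hR'⟩ := hC.isBounded.subset_closedBall 0
  set R := max R' 1 with hRdef
  have hR : 0 < R := lt_of_lt_of_le one_pos (le_max_right _ _)
  have hRb : ∀ q ∈ C, ‖q‖ ≤ R := by
    intro q hq
    have := hR' hq
    rw [Metric.mem_closedBall, dist_zero_right] at this
    exact this.trans (le_max_left _ _)
  rw [hasFDerivAt_iff_isLittleO_nhds_zero]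
  rw [Asymptotics.isLittleO_iff]
  intro c hc
  obtain ⟨δ, hδ, hkey⟩ := argmax_continuity hC hR hRb hq₀ hmax huniq hc
  rw [Metric.eventually_nhds_iff]
  refine ⟨δ, hδ, ?_⟩
  intro h hh
  rw [dist_zero_right] at hh
  obtain ⟨qh, hqhC, hqhmax⟩ := sF_exists_max hC hCne (u₀ + h)
  have hnear : ‖qh - q₀‖ < c := by
    apply hkey (u₀ + h) (by simpa using hh) qh hqhC hqhmax.symm
  have hlow : 0 ≤ sF C (u₀ + h) - sF C u₀ - ⟪q₀, h⟫ := by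
    have h1 : ⟪u₀ + h, q₀⟫ ≤ sF C (u₀ + h) := le_sF hC hq₀
    rw [inner_add_left, hmax] at h1
    have h2 : ⟪h, q₀⟫ = ⟪q₀, h⟫ := real_inner_comm _ _
    linarith
  have hhigh : sF C (u₀ + h) - sF C u₀ - ⟪q₀, h⟫ ≤ ‖h‖ * ‖qh - q₀‖ := by
    have h1 : ⟪u₀, qh⟫ ≤ sF C u₀ := le_sF hC hqhC
    have h2 : sF C (u₀ + h) = ⟪u₀, qh⟫ + ⟪h, qh⟫ := by
      rw [hqhmax, inner_add_left]
    have h3 : ⟪h, qh⟫ - ⟪q₀, h⟫ = ⟪h, qh - q₀⟫ := by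
      rw [inner_sub_right, real_inner_comm q₀ h]
    have h4 : ⟪h, qh - q₀⟫ ≤ ‖h‖ * ‖qh - q₀‖ := real_inner_le_norm _ _
    linarith
  have happ : (innerSL ℝ q₀ : V2 →L[ℝ] ℝ) h = ⟪q₀, h⟫ := rfl
  rw [Real.norm_eq_abs, happ, abs_le]
  have hc0 : 0 ≤ c * ‖h‖ := by positivity
  constructor
  · linarith
  · have : ‖h‖ * ‖qh - q₀‖ ≤ ‖h‖ * c := by
      exact mul_le_mul_of_nonneg_left hnear.le (norm_nonneg h)
    nlinarith [hhigh]
end Danskin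

section ImageCircle

lemma smul_rotJ_image (r : ℝ) (S : Set V2) : r • (rotJ '' S) = rotJ '' (r • S) := by
  ext y
  constructor
  · rintro ⟨_, ⟨s, hs, rfl⟩, rfl⟩
    exact ⟨r • s, smul_mem_smul_set hs, by simpa using rotJ_smul r s⟩
  · rintro ⟨_, ⟨s, hs, rfl⟩, rfl⟩
    exact ⟨rotJ s, ⟨s, hs, rfl⟩, by simpa using (rotJ_smul r s).symm⟩

lemma gauge_rotJ_image (S : Set V2) (x : V2) : gauge (rotJ '' S) (rotJ x) = gauge S x := by
  unfold gauge
  congr 1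
  ext r
  simp only [Set.mem_setOf_eq, smul_rotJ_image]
  constructor
  · rintro ⟨hr, hmem⟩
    exact ⟨hr, (rotJ_injective.mem_set_image).1 hmem⟩
  · rintro ⟨hr, hmem⟩
    exact ⟨hr, Set.mem_image_of_mem _ hmem⟩

/-- `rotJ` as a continuous linear map -/
def rotJL : V2 →L[ℝ] V2 :=
  LinearMap.toContinuousLinearMap (rotJe : V2 →ₗ[ℝ] V2)

@[simp] lemma rotJL_apply (x : V2) : rotJL x = rotJ x := rfl

/-- unit circle parametrization -/
def circ (θ : ℝ) : V2 := (WithLp.equiv 2 (Fin 2 → ℝ)).symm ![Real.cos θ, Real.sin θ]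

lemma circ_apply0 (θ : ℝ) : circ θ 0 = Real.cos θ := rfl
lemma circ_apply1 (θ : ℝ) : circ θ 1 = Real.sin θ := rfl

lemma circ_ne_zero (θ : ℝ) : circ θ ≠ 0 := by
  intro h
  have h1 : ⟪circ θ, circ θ⟫ = 0 := by rw [h, inner_zero_right]
  rw [inner_eq, circ_apply0, circ_apply1] at h1
  nlinarith [Real.sin_sq_add_cos_sq θ]

lemma hasDerivAt_circ (θ : ℝ) : HasDerivAt circ (rotJ (circ θ)) θ := by
  have h1 : HasDerivAt (fun t : ℝ => (![Real.cos t, Real.sin t] : Fin 2 → ℝ))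
      ![-Real.sin θ, Real.cos θ] θ := by
    rw [hasDerivAt_pi]
    intro i
    fin_cases i
    · simpa using Real.hasDerivAt_cos θ
    · simpa using Real.hasDerivAt_sin θ
  have h2 := ((PiLp.continuousLinearEquiv 2 ℝ (fun _ : Fin 2 => ℝ)).symm.hasFDerivAt
    (x := (![Real.cos θ, Real.sin θ] : Fin 2 → ℝ))).comp_hasDerivAt θ h1
  exact h2

lemma circ_surj {u : V2} (hu : u ≠ 0) : ∃ θ : ℝ, u = ‖u‖ • circ θ := by
  have hn : 0 < ‖u‖ := norm_pos_iff.2 hu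
  set w : V2 := ‖u‖⁻¹ • u with hw
  have hw1 : w 0 * w 0 + w 1 * w 1 = 1 := by
    have h1 : ⟪w, w⟫ = 1 := by
      rw [hw, real_inner_smul_left, real_inner_smul_right, real_inner_self_eq_norm_sq]
      field_simp
    rw [inner_eq] at h1
    exact h1
  have hw0le : -1 ≤ w 0 ∧ w 0 ≤ 1 := by
    constructor <;> nlinarith [sq_nonneg (w 1), sq_nonneg (w 0 + 1), sq_nonneg (w 0 - 1)]
  have hsq : Real.sqrt (1 - w 0 ^ 2) = |w 1| := by
    rw [show (1 : ℝ) - w 0 ^ 2 = (w 1) ^ 2 by nlinarith, Real.sqrt_sq_eq_abs]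
  have key : ∃ θ, circ θ = w := by
    rcases le_or_gt 0 (w 1) with h1 | h1
    · refine ⟨Real.arccos (w 0), ?_⟩
      ext i
      fin_cases i
      · show Real.cos (Real.arccos (w 0)) = w 0
        exact Real.cos_arccos hw0le.1 hw0le.2
      · show Real.sin (Real.arccos (w 0)) = w 1
        rw [Real.sin_arccos, hsq, abs_of_nonneg h1]
    · refine ⟨-Real.arccos (w 0), ?_⟩
      ext i
      fin_cases i
      · show Real.cos (-Real.arccos (w 0)) = w 0
        rw [Real.cos_neg]
        exact Real.cos_arccos hw0le.1 hw0le.2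
      · show Real.sin (-Real.arccos (w 0)) = w 1
        rw [Real.sin_neg, Real.sin_arccos, hsq, abs_of_neg h1]
        ring
  obtain ⟨θ, hθ⟩ := key
  refine ⟨θ, ?_⟩
  rw [hθ, hw, smul_smul, mul_inv_cancel₀ hn.ne', one_smul]

end ImageCircle

section MainLemmas

variable {K L : Set V2}

/-- a choice of maximizer of `⟪u, ·⟫` over `C` -/
def amax (C : Set V2) (u : V2) : V2 :=
  @dite _ (∃ z, z ∈ C ∧ sF C u = ⟪u, z⟫) (Classical.dec _) (fun h => h.choose) (fun _ => 0)

lemma amax_spec {C : Set V2} (hC : IsCompact C) (hne : C.Nonempty) (u : V2) :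
    amax C u ∈ C ∧ sF C u = ⟪u, amax C u⟫ := by
  have h : ∃ z, z ∈ C ∧ sF C u = ⟪u, z⟫ := by
    obtain ⟨z, hz, he⟩ := sF_exists_max hC hne u
    exact ⟨z, hz, he⟩
  unfold amax
  rw [dif_pos h]
  exact h.choose_spec

lemma hasFDerivAt_sFK (hK : IsSymmConvexBody K) (hKsc : IsStrictlyConvexBody K) {u : V2}
    (hu : u ≠ 0) : HasFDerivAt (sF K) (innerSL ℝ (amax K u)) u := by
  obtain ⟨hmem, hmax⟩ := amax_spec hK.compact hK.nonempty u
  exact danskin hK.compact hK.nonempty hmem hmax.symm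
    (fun q hq hqm => max_unique hK hKsc hu hq hmem hqm hmax.symm)

lemma maxL_unique (hL : IsSymmConvexBody L) (hLsm : IsSmoothBody L) {w : V2} (hw : w ≠ 0)
    {q q' : V2} (hq : q ∈ polar2 L) (hqm : ⟪w, q⟫ = sF (polar2 L) w)
    (hq' : q' ∈ polar2 L) (hqm' : ⟪w, q'⟫ = sF (polar2 L) w) : q = q' := by
  obtain ⟨f₀, _, huniq⟩ := hLsm _ (normalized_mem_sphere hL hw)
  have h1 := (max_iff_support hL hw).1 ⟨hq, hqm⟩
  have h2 := (max_iff_support hL hw).1 ⟨hq', hqm'⟩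
  exact dualOf_injective ((huniq _ h1).trans (huniq _ h2).symm)

lemma amax_ne_zero (hK : IsSymmConvexBody K) {u : V2} (hu : u ≠ 0) : amax K u ≠ 0 := by
  obtain ⟨_, hmax⟩ := amax_spec hK.compact hK.nonempty u
  intro h
  rw [h, inner_zero_right] at hmax
  exact (sF_pos hK hu).ne' hmax

theorem forward_direction (K L : Set V2) (hK : IsSymmConvexBody K) (hL : IsSymmConvexBody L)
    (hKsc : IsStrictlyConvexBody K) (hLsm : IsSmoothBody L)
    (hcond : ∀ x ∈ bodySphere K, ∀ f : Module.Dual ℝ (EuclideanSpace ℝ (Fin 2)),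
        IsSupportFunctional K x f →
        ∀ v : EuclideanSpace ℝ (Fin 2), f v = 0 →
          (⨅ t : ℝ, gauge L (v + t • x)) = gauge L v) :
    ∃ c : ℝ, 0 < c ∧ L = c • (rotJ '' polar2 K) := by
  -- Step 1: the line condition in scaled form
  have hline : ∀ u : V2, u ≠ 0 → ∀ t : ℝ,
      gauge L (rotJ u) ≤ gauge L (rotJ u + t • amax K u) := by
    intro u hu t
    obtain ⟨hxK, hxmax⟩ := amax_spec hK.compact hK.nonempty u
    set x := amax K u with hxdef
    have ha : 0 < sF K u := sF_pos hK hu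
    set a := sF K u with hadef
    set n := a⁻¹ • u with hndef
    have hn0 : n ≠ 0 := smul_ne_zero (inv_ne_zero ha.ne') hu
    have hnmax : ⟪n, x⟫ = 1 := by
      rw [hndef, real_inner_smul_left, ← hxmax, inv_mul_cancel₀ ha.ne']
    have hsFn : sF K n = 1 := by
      rw [hndef, sF_smul K (by positivity : (0:ℝ) ≤ a⁻¹), ← hadef, inv_mul_cancel₀ ha.ne']
      
    have hxS : x ∈ bodySphere K :=
      gauge_eq_one_of_max hK hn0 hxK (hnmax.trans hsFn.symm)
    have hsupp : IsSupportFunctional K x (dualOf n) := by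
      constructor
      · rw [dualOf_apply]; exact hnmax
      · intro y hy
        rw [dualOf_apply, hndef, real_inner_smul_left]
        have h1 : ⟪u, y⟫ ≤ a := le_sF hK.compact hy
        calc a⁻¹ * ⟪u, y⟫ ≤ a⁻¹ * a := by
              exact mul_le_mul_of_nonneg_left h1 (by positivity)
          _ = 1 := inv_mul_cancel₀ ha.ne'
    have hv : dualOf n (rotJ n) = 0 := by
      rw [dualOf_apply]; exact rotJ_self_inner n
    have hiInf := hcond x hxS (dualOf n) hsupp (rotJ n) hv
    have hBdd : BddBelow (Set.range fun s : ℝ => gauge L (rotJ n + s • x)) := by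
      refine ⟨0, ?_⟩
      rintro _ ⟨s, rfl⟩
      exact gauge_nonneg _
    have hge : ∀ s : ℝ, gauge L (rotJ n) ≤ gauge L (rotJ n + s • x) := by
      intro s
      rw [← hiInf]
      exact ciInf_le hBdd s
    have hu_an : a • n = u := by
      rw [hndef, smul_smul, mul_inv_cancel₀ ha.ne', one_smul]
    have hsc : rotJ u + t • x = a • (rotJ n + (a⁻¹ * t) • x) := by
      rw [smul_add, ← rotJ_smul, hu_an, smul_smul, mul_inv_cancel_left₀ ha.ne']
    have hsc0 : rotJ u = a • rotJ n := by rw [← rotJ_smul, hu_an]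
    rw [hsc, hsc0, gauge_smul_of_nonneg ha.le, gauge_smul_of_nonneg ha.le,
      smul_eq_mul, smul_eq_mul]
    exact mul_le_mul_of_nonneg_left (hge _) ha.le
  -- Step 2: derivative of u ↦ gauge L (rotJ u)
  have hFd : ∀ u : V2, u ≠ 0 →
      HasFDerivAt (fun y => gauge L (rotJ y))
        ((gauge L (rotJ u) / sF K u) • innerSL ℝ (amax K u)) u := by
    intro u hu
    have hw : rotJ u ≠ 0 := rotJ_ne_zero hu
    obtain ⟨hqmem, hqmax⟩ :=
      amax_spec (polar2_body hL).compact (polar2_body hL).nonempty (rotJ u)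
    set q := amax (polar2 L) (rotJ u) with hqdef
    obtain ⟨hxK, hxmax⟩ := amax_spec hK.compact hK.nonempty u
    set x := amax K u with hxdef
    have hx0 : x ≠ 0 := amax_ne_zero hK hu
    have hperp : ⟪q, x⟫ = 0 :=
      max_perp_of_line hL hLsm hw (hline u hu) hqmem hqmax.symm
    obtain ⟨μ, hμ⟩ := exists_smul_rotJ hx0 (by rwa [real_inner_comm] at hperp)
    have hval : ⟪rotJ u, q⟫ = gauge L (rotJ u) := by
      rw [gauge_eq_sF_polar2 hL, hqmax]
    have hμval : μ * sF K u = gauge L (rotJ u) := by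
      rw [← hval, hμ, real_inner_smul_right, rotJ_inner, ← hxmax]
    have hd : HasFDerivAt (sF (polar2 L)) (innerSL ℝ q) (rotJ u) :=
      danskin (polar2_body hL).compact (polar2_body hL).nonempty hqmem hqmax.symm
        (fun q' hq' hqm' => maxL_unique hL hLsm hw hq' hqm' hqmem hqmax.symm)
    have hcomp : HasFDerivAt (fun y => sF (polar2 L) (rotJL y))
        ((innerSL ℝ q).comp rotJL) u := hd.comp u rotJL.hasFDerivAt
    have hfun : (fun y : V2 => sF (polar2 L) (rotJL y)) = (fun y => gauge L (rotJ y)) := by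
      funext y
      rw [rotJL_apply, gauge_eq_sF_polar2 hL]
    have hCLM : (innerSL ℝ q).comp rotJL
        = (gauge L (rotJ u) / sF K u) • innerSL ℝ x := by
      apply ContinuousLinearMap.ext
      intro y
      have h1 : ((innerSL ℝ q).comp rotJL) y = ⟪q, rotJ y⟫ := rfl
      have h2 : ((gauge L (rotJ u) / sF K u) • innerSL ℝ x) y
          = (gauge L (rotJ u) / sF K u) * ⟪x, y⟫ := rfl
      rw [h1, h2, hμ, real_inner_smul_left, rotJ_inner]
      rw [← hμval]
      have hsf : sF K u ≠ 0 := (sF_pos hK hu).ne'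
      rw [mul_div_assoc, div_self hsf, mul_one]
    rw [hfun] at hcomp
    rw [hCLM] at hcomp
    exact hcomp
  -- Step 3: the ratio is constant
  set k := gauge L (rotJ (circ 0)) / sF K (circ 0) with hk
  have hkpos : 0 < k :=
    div_pos (hL.gauge_pos (rotJ_ne_zero (circ_ne_zero 0))) (sF_pos hK (circ_ne_zero 0))
  have hconst : ∀ θ : ℝ, gauge L (rotJ (circ θ)) / sF K (circ θ) = k := by
    set r : ℝ → ℝ := fun θ => gauge L (rotJ (circ θ)) / sF K (circ θ) with hr
    have hder : ∀ θ : ℝ, HasDerivAt r 0 θ := by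
      intro θ
      have hu := circ_ne_zero θ
      have h1 : HasDerivAt (fun t => gauge L (rotJ (circ t)))
          (((gauge L (rotJ (circ θ)) / sF K (circ θ)) • innerSL ℝ (amax K (circ θ)))
            (rotJ (circ θ))) θ :=
        (hFd _ hu).comp_hasDerivAt θ (hasDerivAt_circ θ)
      have h2 : HasDerivAt (fun t => sF K (circ t))
          ((innerSL ℝ (amax K (circ θ))) (rotJ (circ θ))) θ :=
        (hasFDerivAt_sFK hK hKsc hu).comp_hasDerivAt θ (hasDerivAt_circ θ)
      have hψ : sF K (circ θ) ≠ 0 := (sF_pos hK hu).ne'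
      have h3 := h1.div h2 hψ
      refine h3.congr_deriv ?_
      have happ : ((gauge L (rotJ (circ θ)) / sF K (circ θ)) • innerSL ℝ (amax K (circ θ)))
          (rotJ (circ θ))
          = (gauge L (rotJ (circ θ)) / sF K (circ θ)) *
            ((innerSL ℝ (amax K (circ θ))) (rotJ (circ θ))) := rfl
      rw [happ]
      field_simp
      ring
    have hdiff : Differentiable ℝ r := fun θ => (hder θ).differentiableAt
    intro θ
    exact is_const_of_deriv_eq_zero hdiff (fun s => (hder s).deriv) θ 0
  have hhom : ∀ u : V2, u ≠ 0 → gauge L (rotJ u) = k * sF K u := by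
    intro u hu
    obtain ⟨θ, hθ⟩ := circ_surj hu
    rw [hθ, rotJ_smul, gauge_smul_of_nonneg (norm_nonneg u), sF_smul K (norm_nonneg u)]
    have h1 := hconst θ
    rw [div_eq_iff (sF_pos hK (circ_ne_zero θ)).ne'] at h1
    rw [smul_eq_mul, h1]
    ring
  -- Step 4: conclude
  refine ⟨k⁻¹, by positivity, ?_⟩
  ext u
  rw [hL.mem_iff_gauge_le_one]
  rcases eq_or_ne u 0 with rfl | hu
  · have h1 : gauge L (0:V2) ≤ 1 := by rw [gauge_zero]; norm_num
    have h2 : (0:V2) ∈ k⁻¹ • (rotJ '' polar2 K) := by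
      have h0 : (0:V2) ∈ rotJ '' polar2 K := by
        refine ⟨0, (polar2_body hK).zero_mem, ?_⟩
        ext i; fin_cases i <;> simp [rotJ, WithLp.equiv_symm_apply]
      simpa using smul_mem_smul_set (a := k⁻¹) h0
    exact ⟨fun _ => h2, fun _ => h1⟩
  · set x := -rotJ u with hxdef
    have hx0 : x ≠ 0 := by
      rw [hxdef, neg_ne_zero]
      exact rotJ_ne_zero hu
    have hrx : rotJ x = u := by
      rw [hxdef, rotJ_neg, rotJ_rotJ, neg_neg]
    have hgu : gauge L u = k * sF K x := by
      rw [← hrx]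
      exact hhom x hx0
    have hsmul : k • u = rotJ (k • x) := by rw [rotJ_smul, hrx]
    constructor
    · intro h
      rw [Set.mem_smul_set_iff_inv_smul_mem₀ (inv_ne_zero hkpos.ne'), inv_inv, hsmul]
      apply Set.mem_image_of_mem
      apply (polar2_body hK).mem_iff_gauge_le_one.2
      rw [gauge_smul_of_nonneg hkpos.le, smul_eq_mul, gauge_polar2 hK]
      rw [hgu] at h
      exact h
    · intro h
      rw [Set.mem_smul_set_iff_inv_smul_mem₀ (inv_ne_zero hkpos.ne'), inv_inv, hsmul] at h
      have h2 := rotJ_injective.mem_set_image.1 h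
      have h3 := (polar2_body hK).mem_iff_gauge_le_one.1 h2
      rw [gauge_smul_of_nonneg hkpos.le, smul_eq_mul, gauge_polar2 hK] at h3
      rw [hgu]
      exact h3

end MainLemmas

section Backward

variable {K : Set V2}

lemma sF_neg (hB : IsSymmConvexBody K) (u : V2) : sF K (-u) = sF K u := by
  have key : ∀ w : V2, sF K (-w) ≤ sF K w := by
    intro w
    apply sF_le hB.nonempty
    intro z hz
    have h1 : ⟪-w, z⟫ = ⟪w, -z⟫ := by
      rw [inner_neg_left, inner_neg_right]
    rw [h1]
    exact le_sF hB.compact (hB.neg_mem hz)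
  refine le_antisymm (key u) ?_
  have := key (-u)
  rwa [neg_neg] at this

theorem backward_direction (K : Set V2) (hK : IsSymmConvexBody K) {c : ℝ} (hc : 0 < c) :
    ∀ x ∈ bodySphere K, ∀ f : Module.Dual ℝ (EuclideanSpace ℝ (Fin 2)),
        IsSupportFunctional K x f →
        ∀ v : EuclideanSpace ℝ (Fin 2), f v = 0 →
          (⨅ t : ℝ, gauge (c • (rotJ '' polar2 K)) (v + t • x))
            = gauge (c • (rotJ '' polar2 K)) v := by
  intro x hx f hf v hfv
  obtain ⟨n, hn⟩ := exists_riesz f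
  have hfx : ⟪n, x⟫ = 1 := by rw [← hn]; exact hf.1
  have hn0 : n ≠ 0 := by
    intro h
    rw [h, inner_zero_left] at hfx
    norm_num at hfx
  have hv' : ⟪n, v⟫ = 0 := by rw [← hn]; exact hfv
  obtain ⟨s, rfl⟩ := exists_smul_rotJ hn0 hv'
  have hgauge : ∀ y : V2, gauge (c • (rotJ '' polar2 K)) y = c⁻¹ * sF K (-rotJ y) := by
    intro y
    rw [gauge_smul_left_of_nonneg hc.le, Pi.smul_apply, smul_eq_mul]
    congr 1
    have hy : rotJ (-rotJ y) = y := by rw [rotJ_neg, rotJ_rotJ, neg_neg]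
    calc gauge (rotJ '' polar2 K) y
        = gauge (rotJ '' polar2 K) (rotJ (-rotJ y)) := by rw [hy]
      _ = gauge (polar2 K) (-rotJ y) := gauge_rotJ_image _ _
      _ = sF K (-rotJ y) := gauge_polar2 hK _
  have hxK : x ∈ K := mem_of_bodySphere hK hx
  have hsn : sF K n = 1 := by
    apply le_antisymm
    · apply sF_le hK.nonempty
      intro z hz
      rw [← hn z]
      exact hf.2 z hz
    · rw [← hfx]
      exact le_sF hK.compact hxK
  have hvval : -rotJ (s • rotJ n) = s • n := by
    rw [rotJ_smul, rotJ_rotJ, smul_neg, neg_neg]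
  have habs : sF K (s • n) = |s| := by
    rcases le_or_gt 0 s with hs | hs
    · rw [sF_smul K hs, hsn, mul_one, abs_of_nonneg hs]
    · have h2 : s • n = (-s) • (-n) := by rw [neg_smul, smul_neg, neg_neg]
      rw [h2, sF_smul K (by linarith), sF_neg hK, hsn, mul_one, abs_of_neg hs]
  have hxperp : ⟪rotJ x, x⟫ = 0 := by
    rw [real_inner_comm]
    exact rotJ_self_inner x
  have hptw : ∀ t : ℝ, gauge (c • (rotJ '' polar2 K)) (s • rotJ n)
      ≤ gauge (c • (rotJ '' polar2 K)) (s • rotJ n + t • x) := by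
    intro t
    rw [hgauge, hgauge]
    apply mul_le_mul_of_nonneg_left ?_ (by positivity)
    rw [hvval, habs]
    have hval2 : -rotJ (s • rotJ n + t • x) = s • n + (-t) • rotJ x := by
      rw [rotJ_add, rotJ_smul, rotJ_smul, rotJ_rotJ, neg_add, smul_neg, neg_neg, neg_smul]
    rw [hval2]
    rcases le_or_gt 0 s with hs | hs
    · have h1 : ⟪s • n + (-t) • rotJ x, x⟫ = s := by
        rw [inner_add_left, real_inner_smul_left, real_inner_smul_left, hfx, hxperp]
        ring
      rw [abs_of_nonneg hs]
      calc s = ⟪s • n + (-t) • rotJ x, x⟫ := h1.symm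
        _ ≤ sF K (s • n + (-t) • rotJ x) := le_sF hK.compact hxK
    · have h1 : ⟪s • n + (-t) • rotJ x, -x⟫ = -s := by
        rw [inner_neg_right, inner_add_left, real_inner_smul_left, real_inner_smul_left,
          hfx, hxperp]
        ring
      rw [abs_of_neg hs]
      calc -s = ⟪s • n + (-t) • rotJ x, -x⟫ := h1.symm
        _ ≤ sF K (s • n + (-t) • rotJ x) := le_sF hK.compact (hK.neg_mem hxK)
  have hBdd : BddBelow (Set.range fun t : ℝ =>
      gauge (c • (rotJ '' polar2 K)) (s • rotJ n + t • x)) := by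
    refine ⟨0, ?_⟩
    rintro _ ⟨t, rfl⟩
    exact gauge_nonneg _
  apply le_antisymm
  · have h0 := ciInf_le hBdd (0:ℝ)
    simpa using h0
  · exact le_ciInf hptw

end Backward

/-- For smooth strictly convex symmetric bodies `K, L ⊆ ℝ²`, the
quotient and immersion Finsler structures induced by `L` on `∂K` coincide iff `L` is
homothetic to the isoperimetrix of `K`, i.e. `L = c • J(K°)` for some `c > 0`. -/
theorem quotient_eq_immersion_iff_isoperimetrix
    (K L : Set (EuclideanSpace ℝ (Fin 2)))
    (hK : IsSymmConvexBody K) (hL : IsSymmConvexBody L)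
    (hKsm : IsSmoothBody K) (hLsm : IsSmoothBody L)
    (hKsc : IsStrictlyConvexBody K) (hLsc : IsStrictlyConvexBody L) :
    (∀ x ∈ bodySphere K, ∀ f : Module.Dual ℝ (EuclideanSpace ℝ (Fin 2)),
        IsSupportFunctional K x f →
        ∀ v : EuclideanSpace ℝ (Fin 2), f v = 0 →
          (⨅ t : ℝ, gauge L (v + t • x)) = gauge L v) ↔
      (∃ c : ℝ, 0 < c ∧ L = c • (rotJ '' polar2 K)) := by
  constructor
  · intro hcond
    exact forward_direction K L hK hL hKsc hLsm hcond
  · rintro ⟨c, hc, rfl⟩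
    exact backward_direction K hK hc

end
end

section
/- Let V be a finite-dimensional real vector space. Let T, T' : V → V be linear maps with T ∘ T = 0 and T' ∘ T' = 0 and rank T = rank T', and let Λ, Λ' ⊆ V be subspaces with range T ⊆ Λ ⊆ ker T, range T' ⊆ Λ' ⊆ ker T', and dim Λ = dim Λ'. Then there exists an invertible linear map U : V → V such that U(Λ) = Λ' and U ∘ T ∘ U⁻¹ = T'. -/
open Submodule LinearMap Module

lemma decomp_aux {V : Type*} [AddCommGroup V] [Module ℝ V] [FiniteDimensional ℝ V]
    (T : V →ₗ[ℝ] V) (Λ : Submodule ℝ V)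
    (h1 : LinearMap.range T ≤ Λ) (h2 : Λ ≤ LinearMap.ker T) :
    ∃ (W : Submodule ℝ V) (C₀ : Submodule ℝ ↥Λ) (D₀ : Submodule ℝ ↥(LinearMap.ker T))
      (Φ : V ≃ₗ[ℝ] ((↥(LinearMap.range T) × ↥C₀) × ↥D₀) × ↥W)
      (tW : ↥W ≃ₗ[ℝ] ↥(LinearMap.range T)),
      (∀ w : ↥W, (tW w : V) = T (w : V)) ∧
      (∀ (r : LinearMap.range T) (c : C₀) (d : D₀) (w : W),
        (Φ.symm (((r, c), d), w) : V) = (r : V) + ((c : ↥Λ) : V)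
          + ((d : ↥(LinearMap.ker T)) : V) + (w : V)) ∧
      (∀ x ∈ Λ, (Φ x).1.2 = 0 ∧ (Φ x).2 = 0) ∧
      (∀ (x : V) (hx : x ∈ LinearMap.range T), Φ x = (((⟨x, hx⟩, 0), 0), 0)) ∧
      (∀ x ∈ LinearMap.ker T, (Φ x).2 = 0) ∧
      (∀ w : W, Φ (w : V) = (((0, 0), 0), w)) ∧
      (finrank ℝ ↥(LinearMap.range T) + finrank ℝ C₀ = finrank ℝ Λ) ∧
      (finrank ℝ Λ + finrank ℝ D₀ = finrank ℝ (LinearMap.ker T)) := by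
  obtain ⟨W, hW⟩ := Submodule.exists_isCompl (LinearMap.ker T)
  obtain ⟨C₀, hC₀⟩ := Submodule.exists_isCompl ((LinearMap.range T).comap Λ.subtype)
  obtain ⟨D₀, hD₀⟩ := Submodule.exists_isCompl (Λ.comap (LinearMap.ker T).subtype)
  -- the restricted map W → range T
  have hmem : ∀ w : ↥W, T (w : V) ∈ LinearMap.range T := fun w => LinearMap.mem_range_self T (w : V)
  set f : ↥W →ₗ[ℝ] ↥(LinearMap.range T) :=
    (T.domRestrict W).codRestrict (LinearMap.range T) hmem with hf
  have hinj : Function.Injective f := by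
    intro a b hab
    have : T (a : V) = T (b : V) := congrArg Subtype.val hab
    have hk : ((a : V) - b) ∈ LinearMap.ker T ⊓ W :=
      ⟨by simp [LinearMap.mem_ker, map_sub, this], sub_mem a.2 b.2⟩
    rw [hW.inf_eq_bot] at hk
    exact Subtype.ext (by simpa [sub_eq_zero] using hk)
  have hfr : finrank ℝ W = finrank ℝ (LinearMap.range T) := by
    have h3 := Submodule.finrank_add_eq_of_isCompl hW
    have h4 := LinearMap.finrank_range_add_finrank_ker T
    omega
  set tW : ↥W ≃ₗ[ℝ] ↥(LinearMap.range T) := LinearEquiv.ofBijective f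
    ⟨hinj, by
      have := (LinearMap.injective_iff_surjective_of_finrank_eq_finrank hfr).1 hinj
      exact this⟩ with htW
  set e1 : V ≃ₗ[ℝ] ↥(LinearMap.ker T) × ↥W := (Submodule.prodEquivOfIsCompl _ _ hW).symm
  set e2 : ↥(LinearMap.ker T) ≃ₗ[ℝ] ↥(Λ.comap (LinearMap.ker T).subtype) × ↥D₀ :=
    (Submodule.prodEquivOfIsCompl _ _ hD₀).symm
  set e3 := Submodule.comapSubtypeEquivOfLe h2
  set e4 : ↥Λ ≃ₗ[ℝ] ↥((LinearMap.range T).comap Λ.subtype) × ↥C₀ :=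
    (Submodule.prodEquivOfIsCompl _ _ hC₀).symm
  set e5 := Submodule.comapSubtypeEquivOfLe h1
  set g : ↥(Λ.comap (LinearMap.ker T).subtype) ≃ₗ[ℝ] ↥(LinearMap.range T) × ↥C₀ :=
    e3 ≪≫ₗ e4 ≪≫ₗ LinearEquiv.prodCongr e5 (LinearEquiv.refl ℝ _) with hg
  set Φ : V ≃ₗ[ℝ] ((↥(LinearMap.range T) × ↥C₀) × ↥D₀) × ↥W :=
    e1 ≪≫ₗ LinearEquiv.prodCongr
      (e2 ≪≫ₗ LinearEquiv.prodCongr g (LinearEquiv.refl ℝ _))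
      (LinearEquiv.refl ℝ _) with hΦ
  refine ⟨W, C₀, D₀, Φ, tW, ?_, ?_, ?_, ?_, ?_, ?_, ?_, ?_⟩
  · intro w; simp [htW, hf, LinearEquiv.ofBijective_apply]; rfl
  · intro r c d w
    simp [hΦ, hg, e1, e2, e3, e4, e5, LinearEquiv.prodCongr_symm, LinearEquiv.trans_apply,
      LinearEquiv.prodCongr_apply, Submodule.coe_prodEquivOfIsCompl',
      Submodule.comapSubtypeEquivOfLe_symm_apply, add_assoc]
  · intro x hx
    have hxK : x ∈ LinearMap.ker T := h2 hx
    have s1 : e1 x = (⟨x, hxK⟩, 0) :=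
      Submodule.prodEquivOfIsCompl_symm_apply_left _ _ hW (⟨x, hxK⟩ : ↥(LinearMap.ker T))
    have hxΛK : (⟨x, hxK⟩ : ↥(LinearMap.ker T)) ∈ Λ.comap (LinearMap.ker T).subtype := hx
    have s2 : e2 ⟨x, hxK⟩ = (⟨⟨x, hxK⟩, hxΛK⟩, 0) :=
      Submodule.prodEquivOfIsCompl_symm_apply_left _ _ hD₀ ⟨⟨x, hxK⟩, hxΛK⟩
    constructor
    · simp [hΦ, s1, s2]
    · simp [hΦ, s1]
  · intro x hx
    have hxΛ : x ∈ Λ := h1 hx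
    have hxK : x ∈ LinearMap.ker T := h2 hxΛ
    have s1 : e1 x = (⟨x, hxK⟩, 0) :=
      Submodule.prodEquivOfIsCompl_symm_apply_left _ _ hW (⟨x, hxK⟩ : ↥(LinearMap.ker T))
    have hxΛK : (⟨x, hxK⟩ : ↥(LinearMap.ker T)) ∈ Λ.comap (LinearMap.ker T).subtype := hxΛ
    have s2 : e2 ⟨x, hxK⟩ = (⟨⟨x, hxK⟩, hxΛK⟩, 0) :=
      Submodule.prodEquivOfIsCompl_symm_apply_left _ _ hD₀ ⟨⟨x, hxK⟩, hxΛK⟩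
    have s3 : e3 ⟨⟨x, hxK⟩, hxΛK⟩ = ⟨x, hxΛ⟩ := rfl
    have hxRΛ : (⟨x, hxΛ⟩ : ↥Λ) ∈ (LinearMap.range T).comap Λ.subtype := hx
    have s4 : e4 ⟨x, hxΛ⟩ = (⟨⟨x, hxΛ⟩, hxRΛ⟩, 0) :=
      Submodule.prodEquivOfIsCompl_symm_apply_left _ _ hC₀ ⟨⟨x, hxΛ⟩, hxRΛ⟩
    have s5 : e5 ⟨⟨x, hxΛ⟩, hxRΛ⟩ = ⟨x, hx⟩ := rfl
    simp [hΦ, hg, s1, s2, s3, s4, s5]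
  · intro x hx
    have s1 : e1 x = (⟨x, hx⟩, 0) :=
      Submodule.prodEquivOfIsCompl_symm_apply_left _ _ hW (⟨x, hx⟩ : ↥(LinearMap.ker T))
    simp [hΦ, s1]
  · intro w
    have s1 : e1 w = (0, w) := Submodule.prodEquivOfIsCompl_symm_apply_right _ _ hW w
    simp [hΦ, s1]; rfl
  · have h5 := Submodule.finrank_add_eq_of_isCompl hC₀
    have h6 : finrank ℝ ↥((LinearMap.range T).comap Λ.subtype)
        = finrank ℝ ↥(LinearMap.range T) :=
      (Submodule.comapSubtypeEquivOfLe h1).finrank_eq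
    have h7 : finrank ℝ ↥(⊤ : Submodule ℝ ↥Λ) = finrank ℝ ↥Λ := finrank_top ℝ _
    omega
  · have h5 := Submodule.finrank_add_eq_of_isCompl hD₀
    have h6 : finrank ℝ ↥(Λ.comap (LinearMap.ker T).subtype) = finrank ℝ ↥Λ :=
      (Submodule.comapSubtypeEquivOfLe h2).finrank_eq
    have h7 : finrank ℝ ↥(⊤ : Submodule ℝ ↥(LinearMap.ker T))
        = finrank ℝ ↥(LinearMap.ker T) := finrank_top ℝ _
    omega


/-- The `GL(V)`-orbits on the cotangent bundle of the Grassmannian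
are the strata of constant rank: if `T² = 0 = T'²`, `rank T = rank T'`,
`range T ⊆ Λ ⊆ ker T`, `range T' ⊆ Λ' ⊆ ker T'` and `dim Λ = dim Λ'`, then some
invertible `U : V → V` satisfies `U(Λ) = Λ'` and `U T U⁻¹ = T'`. -/
theorem exists_conjugating_automorphism
    {V : Type*} [AddCommGroup V] [Module ℝ V] [FiniteDimensional ℝ V]
    (T T' : V →ₗ[ℝ] V) (hT : T ∘ₗ T = 0) (hT' : T' ∘ₗ T' = 0)
    (hrank : Module.finrank ℝ (LinearMap.range T) = Module.finrank ℝ (LinearMap.range T'))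
    (Λ Λ' : Submodule ℝ V)
    (hΛ1 : LinearMap.range T ≤ Λ) (hΛ2 : Λ ≤ LinearMap.ker T)
    (hΛ'1 : LinearMap.range T' ≤ Λ') (hΛ'2 : Λ' ≤ LinearMap.ker T')
    (hdim : Module.finrank ℝ Λ = Module.finrank ℝ Λ') :
    ∃ U : V ≃ₗ[ℝ] V, Λ.map (U : V →ₗ[ℝ] V) = Λ' ∧
      (U : V →ₗ[ℝ] V) ∘ₗ T ∘ₗ (U.symm : V →ₗ[ℝ] V) = T' := by
  obtain ⟨W, C₀, D₀, Φ, tW, htW, hsymm, hΛmem, hR, hK, hWmem, hfr1, hfr2⟩ :=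
    decomp_aux T Λ hΛ1 hΛ2
  obtain ⟨W', C₀', D₀', Φ', tW', htW', hsymm', hΛmem', hR', hK', hWmem', hfr1', hfr2'⟩ :=
    decomp_aux T' Λ' hΛ'1 hΛ'2
  have hCrank : finrank ℝ C₀ = finrank ℝ C₀' := by omega
  have hWrank : finrank ℝ ↥W = finrank ℝ ↥W' := by
    rw [tW.finrank_eq, tW'.finrank_eq]; exact hrank
  have hDrank : finrank ℝ D₀ = finrank ℝ D₀' := by
    have hk : finrank ℝ ↥(LinearMap.ker T) = finrank ℝ ↥(LinearMap.ker T') := by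
      have h4 := LinearMap.finrank_range_add_finrank_ker T
      have h4' := LinearMap.finrank_range_add_finrank_ker T'
      omega
    omega
  let eW : ↥W ≃ₗ[ℝ] ↥W' := LinearEquiv.ofFinrankEq _ _ hWrank
  let eC : ↥C₀ ≃ₗ[ℝ] ↥C₀' := LinearEquiv.ofFinrankEq _ _ hCrank
  let eD : ↥D₀ ≃ₗ[ℝ] ↥D₀' := LinearEquiv.ofFinrankEq _ _ hDrank
  let eR : ↥(LinearMap.range T) ≃ₗ[ℝ] ↥(LinearMap.range T') :=
    tW.symm ≪≫ₗ eW ≪≫ₗ tW'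
  let U : V ≃ₗ[ℝ] V :=
    Φ ≪≫ₗ ((eR.prodCongr eC).prodCongr eD).prodCongr eW ≪≫ₗ Φ'.symm
  have hU : ∀ x : V, U x
      = Φ'.symm (((eR (Φ x).1.1.1, eC (Φ x).1.1.2), eD (Φ x).1.2), eW (Φ x).2) := by
    intro x; rfl
  -- U maps Λ into Λ'
  have hULam : ∀ x ∈ Λ, U x ∈ Λ' := by
    intro x hx
    obtain ⟨hz1, hz2⟩ := hΛmem x hx
    rw [hU, hz1, hz2, map_zero, map_zero, hsymm']
    simp only [Submodule.coe_zero, add_zero]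
    exact add_mem (hΛ'1 (eR (Φ x).1.1.1).2) (Submodule.coe_mem ((eC (Φ x).1.1.2) : ↥Λ'))
  -- U maps ker T into ker T'
  have hUK : ∀ x ∈ LinearMap.ker T, U x ∈ LinearMap.ker T' := by
    intro x hx
    have hz2 := hK x hx
    rw [hU, hz2, map_zero, hsymm']
    simp only [Submodule.coe_zero, add_zero]
    exact add_mem (add_mem (hΛ'2 (hΛ'1 (eR (Φ x).1.1.1).2))
      (hΛ'2 (Submodule.coe_mem ((eC (Φ x).1.1.2) : ↥Λ'))))
      (Submodule.coe_mem ((eD (Φ x).1.2) : ↥(LinearMap.ker T')))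
  -- value of U on elements of range T
  have hUR : ∀ (x : V) (hx : x ∈ LinearMap.range T), U x = (eR ⟨x, hx⟩ : V) := by
    intro x hx
    rw [hU, hR x hx]
    simp only [map_zero, hsymm', Submodule.coe_zero, add_zero]
  -- value of U on elements of W
  have hUW : ∀ w : ↥W, U (w : V) = (eW w : V) := by
    intro w
    rw [hU, hWmem w]
    simp only [map_zero, hsymm', Submodule.coe_zero, zero_add]
  -- intertwining
  have hint : ∀ y : V, U (T y) = T' (U y) := by
    intro y
    have hy : y = ((Φ y).1.1.1 : V) + (((Φ y).1.1.2 : ↥Λ) : V)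
        + (((Φ y).1.2 : ↥(LinearMap.ker T)) : V) + ((Φ y).2 : V) := by
      conv_lhs => rw [← Φ.symm_apply_apply y]
      rw [← hsymm]
    set w : ↥W := (Φ y).2 with hw
    have hTy : T y = T (w : V) := by
      rw [hy]
      have m1 : ((Φ y).1.1.1 : V) ∈ LinearMap.ker T := hΛ2 (hΛ1 (Φ y).1.1.1.2)
      have m2 : (((Φ y).1.1.2 : ↥Λ) : V) ∈ LinearMap.ker T :=
        hΛ2 (Submodule.coe_mem ((Φ y).1.1.2 : ↥Λ))
      have m3 : (((Φ y).1.2 : ↥(LinearMap.ker T)) : V) ∈ LinearMap.ker T :=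
        Submodule.coe_mem ((Φ y).1.2 : ↥(LinearMap.ker T))
      rw [LinearMap.mem_ker] at m1 m2 m3
      simp [map_add, m1, m2, m3]
    have hTw : T (w : V) = (tW w : V) := (htW w).symm
    -- LHS
    have lhs : U (T y) = (tW' (eW w) : V) := by
      rw [hTy, hTw, hUR _ (tW w).2]
      congr 1
      have : (⟨((tW w : V) : V), (tW w).2⟩ : ↥(LinearMap.range T)) = tW w := rfl
      rw [this]
      simp [eR]
    -- RHS
    have rhs : T' (U y) = (tW' (eW w) : V) := by
      have hy2 : U y = U ((Φ y).1.1.1 : V) + U (((Φ y).1.1.2 : ↥Λ) : V)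
          + U (((Φ y).1.2 : ↥(LinearMap.ker T)) : V) + U (w : V) := by
        conv_lhs => rw [hy]
        simp [map_add]
      have k1 : U ((Φ y).1.1.1 : V) ∈ LinearMap.ker T' :=
        hUK _ (hΛ2 (hΛ1 (Φ y).1.1.1.2))
      have k2 : U (((Φ y).1.1.2 : ↥Λ) : V) ∈ LinearMap.ker T' :=
        hUK _ (hΛ2 (Submodule.coe_mem ((Φ y).1.1.2 : ↥Λ)))
      have k3 : U (((Φ y).1.2 : ↥(LinearMap.ker T)) : V) ∈ LinearMap.ker T' :=
        hUK _ (Submodule.coe_mem ((Φ y).1.2 : ↥(LinearMap.ker T)))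
      rw [LinearMap.mem_ker] at k1 k2 k3
      rw [hy2, map_add, map_add, map_add, k1, k2, k3, hUW w]
      rw [← htW' (eW w)]
      abel
    rw [lhs, rhs]
  refine ⟨U, ?_, ?_⟩
  · apply Submodule.eq_of_le_of_finrank_eq
    · rintro _ ⟨x, hx, rfl⟩
      exact hULam x hx
    · rw [LinearEquiv.finrank_map_eq]
      exact hdim
  · ext x
    simp only [LinearMap.comp_apply, LinearEquiv.coe_coe]
    rw [hint (U.symm x), U.apply_symm_apply]
end
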